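/- Let n ≥ 2, let σ > 0, and let x ∈ ℝ^n be a random vector whose entries are i.i.d. N(0, σ²). Let N ≥ 2 be an integer and let Q_N be the symmetric N-bit quantizer, Q_N(x)_i = round(x_i/s)·s with scale s = (max_j |x_j|)/(2^{N−1} − 1). Then E‖x − Q_N(x)‖ ≤ (√(π·log n)/(2^{N−1} − 1)) · E‖x‖. -/

import Mathlib

open MeasureTheory ProbabilityTheory

/-- Euclidean norm of a vector in `ℝ^n`. -/
noncomputable def euclNorm {m : Type*} [Fintype m] (v : m → ℝ) : ℝ :=
  Real.sqrt (∑ i, v i ^ 2)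

/-- Scale of the symmetric `N`-bit quantizer: `s = (max_j |x_j|) / (2^(N-1) - 1)`. -/
noncomputable def symScale (n N : ℕ) (x : Fin n → ℝ) : ℝ :=
  (⨆ j, |x j|) / (2 ^ (N - 1) - 1)

/-- Symmetric `N`-bit quantizer: `Q_N(x)_i = round(x_i / s) * s` (and `Q_N 0 = 0`). -/
noncomputable def symQuant (n N : ℕ) (x : Fin n → ℝ) : Fin n → ℝ :=
  if x = 0 then 0 else fun i => (round (x i / symScale n N x) : ℝ) * symScale n N x

open Real Set

lemma exp_quad_eq {b : ℝ} (hb : 0 < b) (c : ℝ) (x : ℝ) :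
    Real.exp (-b * x ^ 2 + c * x)
      = Real.exp (c ^ 2 / (4 * b)) * Real.exp (-b * (x - c / (2 * b)) ^ 2) := by
  rw [← Real.exp_add]; congr 1; field_simp; ring

lemma integrable_exp_quad {b : ℝ} (hb : 0 < b) (c : ℝ) :
    Integrable (fun x : ℝ => Real.exp (-b * x ^ 2 + c * x)) := by
  simp_rw [exp_quad_eq hb c]
  exact (((integrable_exp_neg_mul_sq hb).comp_sub_right (c / (2 * b)))).const_mul _

lemma integral_exp_quad {b : ℝ} (hb : 0 < b) (c : ℝ) :
    ∫ x : ℝ, Real.exp (-b * x ^ 2 + c * x)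
      = Real.sqrt (π / b) * Real.exp (c ^ 2 / (4 * b)) := by
  simp_rw [exp_quad_eq hb c]
  rw [MeasureTheory.integral_const_mul,
    integral_sub_right_eq_self (fun a : ℝ => Real.exp (-b * a ^ 2)) (c / (2 * b)),
    integral_gaussian]
  ring

lemma integral_Ioi_id_mul_exp {b : ℝ} (hb : 0 < b) :
    ∫ x in Set.Ioi (0:ℝ), x * Real.exp (-b * x ^ 2) = (2 * b)⁻¹ := by
  have hb' : 0 < (b : ℂ).re := by simpa using hb
  have h := integral_mul_cexp_neg_mul_sq hb'
  have h2 : ∀ x : ℝ, (x : ℂ) * Complex.exp (-(b:ℂ) * (x : ℂ) ^ 2)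
      = ((x * Real.exp (-b * x ^ 2) : ℝ) : ℂ) := by
    intro x
    push_cast
    ring
  simp_rw [h2] at h
  have h4 : ∫ r in Set.Ioi (0:ℝ), ((r * rexp (-b*r^2) : ℝ) : ℂ)
      = ((∫ r in Set.Ioi (0:ℝ), r * rexp (-b*r^2) : ℝ) : ℂ) := integral_ofReal
  rw [h4] at h
  exact_mod_cast h

open scoped NNReal

lemma gaussian_integral_eq {v : ℝ≥0} (hv : v ≠ 0) (g : ℝ → ℝ) :
    ∫ y, g y ∂(gaussianReal 0 v) = ∫ y, gaussianPDFReal 0 v y * g y := by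
  rw [gaussianReal_of_var_ne_zero _ hv]
  have hd : (gaussianPDF 0 v) = fun y => ((Real.toNNReal (gaussianPDFReal 0 v y) : ℝ≥0) : ENNReal) :=
    rfl
  rw [hd, integral_withDensity_eq_integral_smul ((measurable_gaussianPDFReal 0 v).real_toNNReal) g]
  refine integral_congr_ae (Filter.Eventually.of_forall fun y => ?_)
  simp [NNReal.smul_def, Real.coe_toNNReal _ (gaussianPDFReal_nonneg 0 v y)]

lemma gaussian_integrable {v : ℝ≥0} (hv : v ≠ 0) {g : ℝ → ℝ}
    (hg : Integrable (fun y => gaussianPDFReal 0 v y * g y)) :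
    Integrable g (gaussianReal 0 v) := by
  rw [gaussianReal_of_var_ne_zero _ hv]
  have hd : (gaussianPDF 0 v) = fun y => ((Real.toNNReal (gaussianPDFReal 0 v y) : ℝ≥0) : ENNReal) :=
    rfl
  rw [hd, integrable_withDensity_iff_integrable_smul
    ((measurable_gaussianPDFReal 0 v).real_toNNReal)]
  refine hg.congr (Filter.Eventually.of_forall fun y => ?_)
  simp [NNReal.smul_def, Real.coe_toNNReal _ (gaussianPDFReal_nonneg 0 v y)]

lemma gaussian_pdf_mul_exp {v : ℝ≥0} (hv : v ≠ 0) (t : ℝ) (y : ℝ) :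
    gaussianPDFReal 0 v y * Real.exp (t * y)
      = (Real.sqrt (2 * π * v))⁻¹ * Real.exp (-(2 * (v:ℝ))⁻¹ * y ^ 2 + t * y) := by
  have hv' : (0:ℝ) < v := lt_of_le_of_ne v.coe_nonneg (by exact_mod_cast hv.symm)
  rw [gaussianPDFReal, mul_assoc, ← Real.exp_add]
  congr 2
  field_simp
  ring

lemma gaussian_mgf_integrable {v : ℝ≥0} (hv : v ≠ 0) (t : ℝ) :
    Integrable (fun y => Real.exp (t * y)) (gaussianReal 0 v) := by
  have hv' : (0:ℝ) < v := lt_of_le_of_ne v.coe_nonneg (by exact_mod_cast hv.symm)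
  have hb : (0:ℝ) < (2 * (v:ℝ))⁻¹ := by positivity
  refine gaussian_integrable hv ?_
  simp_rw [gaussian_pdf_mul_exp hv t]
  exact (integrable_exp_quad hb t).const_mul _

lemma gaussian_mgf {v : ℝ≥0} (hv : v ≠ 0) (t : ℝ) :
    ∫ y, Real.exp (t * y) ∂(gaussianReal 0 v) = Real.exp ((v:ℝ) * t ^ 2 / 2) := by
  have hv' : (0:ℝ) < v := lt_of_le_of_ne v.coe_nonneg (by exact_mod_cast hv.symm)
  have hb : (0:ℝ) < (2 * (v:ℝ))⁻¹ := by positivity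
  rw [gaussian_integral_eq hv]
  simp_rw [gaussian_pdf_mul_exp hv t]
  rw [MeasureTheory.integral_const_mul, integral_exp_quad hb t]
  have h1 : π / ((2 * (v:ℝ))⁻¹) = 2 * π * v := by field_simp
  have h2 : t ^ 2 / (4 * (2 * (v:ℝ))⁻¹) = (v:ℝ) * t ^ 2 / 2 := by field_simp; ring
  rw [h1, h2, ← mul_assoc, inv_mul_cancel₀ (by positivity), one_mul]

lemma gaussian_abs_integrable {v : ℝ≥0} (hv : v ≠ 0) :
    Integrable (fun y : ℝ => |y|) (gaussianReal 0 v) := by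
  have hv' : (0:ℝ) < v := lt_of_le_of_ne v.coe_nonneg (by exact_mod_cast hv.symm)
  have hb : (0:ℝ) < (2 * (v:ℝ))⁻¹ := by positivity
  refine gaussian_integrable hv ?_
  have key : ∀ y : ℝ, gaussianPDFReal 0 v y * |y|
      = (Real.sqrt (2 * π * v))⁻¹ * |y * Real.exp (-(2 * (v:ℝ))⁻¹ * y ^ 2)| := by
    intro y
    rw [abs_mul, abs_of_pos (Real.exp_pos _), gaussianPDFReal, mul_assoc, mul_comm |y|]
    congr 3
    field_simp
    ring
  simp_rw [key]
  exact ((integrable_mul_exp_neg_mul_sq hb).abs).const_mul _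

lemma gaussian_abs_integral {v : ℝ≥0} (hv : v ≠ 0) :
    ∫ y, |y| ∂(gaussianReal 0 v) = Real.sqrt (2 * v / π) := by
  have hv' : (0:ℝ) < v := lt_of_le_of_ne v.coe_nonneg (by exact_mod_cast hv.symm)
  have hb : (0:ℝ) < (2 * (v:ℝ))⁻¹ := by positivity
  rw [gaussian_integral_eq hv]
  have key : ∀ y : ℝ, gaussianPDFReal 0 v y * |y|
      = (Real.sqrt (2 * π * v))⁻¹ * (|y| * Real.exp (-(2 * (v:ℝ))⁻¹ * |y| ^ 2)) := by
    intro y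
    rw [sq_abs, gaussianPDFReal, mul_assoc, mul_comm |y|]
    congr 3
    field_simp
    ring
  simp_rw [key]
  rw [MeasureTheory.integral_const_mul,
    integral_comp_abs (f := fun z => z * Real.exp (-(2 * (v:ℝ))⁻¹ * z ^ 2)),
    integral_Ioi_id_mul_exp hb]
  have h1 : 2 * ((2:ℝ) * (2 * (v:ℝ))⁻¹)⁻¹ = 2 * (v:ℝ) := by field_simp
  rw [h1]
  have hs : Real.sqrt (2 * π * (v:ℝ)) ≠ 0 := by positivity
  have h2 : Real.sqrt (2 * π * (v:ℝ)) * Real.sqrt (2 * (v:ℝ) / π) = 2 * (v:ℝ) := by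
    rw [← Real.sqrt_mul (by positivity),
      show (2 * π * (v:ℝ)) * (2 * (v:ℝ) / π) = (2 * (v:ℝ)) ^ 2 by field_simp]
    exact Real.sqrt_sq (by positivity)
  rw [inv_mul_eq_div, div_eq_iff hs]
  linarith [h2, mul_comm (Real.sqrt (2 * π * (v:ℝ))) (Real.sqrt (2 * (v:ℝ) / π))]

lemma fin_sup_exists {n : ℕ} (hn : 0 < n) (v : Fin n → ℝ) : ∃ j, (⨆ i, |v i|) = |v j| := by
  haveI : Nonempty (Fin n) := ⟨⟨0, hn⟩⟩
  obtain ⟨j, -, hj⟩ := Finset.exists_mem_eq_sup' Finset.univ_nonempty (fun i => |v i|)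
  exact ⟨j, by rw [← Finset.sup'_univ_eq_ciSup]; exact hj⟩

lemma fin_le_sup {n : ℕ} (v : Fin n → ℝ) (j : Fin n) : |v j| ≤ ⨆ i, |v i| :=
  le_ciSup (f := fun i => |v i|) (Set.Finite.bddAbove (Set.finite_range _)) j

lemma fin_sup_nonneg {n : ℕ} (hn : 0 < n) (v : Fin n → ℝ) : 0 ≤ ⨆ i, |v i| :=
  le_trans (abs_nonneg _) (fin_le_sup v ⟨0, hn⟩)

lemma pow_sub_one_ge {N : ℕ} (hN : 2 ≤ N) : (1:ℝ) ≤ 2 ^ (N - 1) - 1 := by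
  have h : (2:ℝ) ^ 1 ≤ 2 ^ (N - 1) := by
    apply pow_le_pow_right₀ (by norm_num)
    omega
  simp only [pow_one] at h
  linarith

lemma pointwise_bound (n N : ℕ) (hn : 0 < n) (hN : 2 ≤ N) (v : Fin n → ℝ) :
    euclNorm (v - symQuant n N v)
      ≤ Real.sqrt n / (2 * (2 ^ (N - 1) - 1)) * (⨆ j, |v j|) := by
  haveI : Nonempty (Fin n) := ⟨⟨0, hn⟩⟩
  have hS : (1:ℝ) ≤ 2 ^ (N - 1) - 1 := pow_sub_one_ge hN
  have hS0 : (0:ℝ) < 2 ^ (N - 1) - 1 := lt_of_lt_of_le one_pos hS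
  by_cases hv : v = 0
  · subst hv
    have h0 : (0 : Fin n → ℝ) - symQuant n N 0 = 0 := by simp [symQuant]
    rw [h0]
    simp [euclNorm, ciSup_const]
  · set M := ⨆ j, |v j| with hM
    obtain ⟨j1, hj1⟩ : ∃ j, v j ≠ 0 := Function.ne_iff.mp hv
    have hMpos : 0 < M := lt_of_lt_of_le (abs_pos.mpr hj1) (fin_le_sup v j1)
    set s := symScale n N v with hs
    have hspos : 0 < s := div_pos hMpos hS0
    have herr : ∀ i, |(v - symQuant n N v) i| ≤ s / 2 := by
      intro i
      rw [symQuant, if_neg hv]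
      have h1 : v i - (round (v i / s) : ℝ) * s = (v i / s - round (v i / s)) * s := by
        field_simp
      simp only [Pi.sub_apply]
      rw [h1, abs_mul, abs_of_pos hspos]
      calc |v i / s - (round (v i / s) : ℝ)| * s ≤ (1/2) * s :=
            mul_le_mul_of_nonneg_right (abs_sub_round _) hspos.le
        _ = s / 2 := by ring
    have hsum : (∑ i, (v - symQuant n N v) i ^ 2) ≤ (n : ℝ) * (s/2) ^ 2 := by
      calc (∑ i, (v - symQuant n N v) i ^ 2) ≤ ∑ _i : Fin n, (s/2) ^ 2 := by
            refine Finset.sum_le_sum fun i _ => ?_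
            rw [← sq_abs]
            exact pow_le_pow_left₀ (abs_nonneg _) (herr i) 2
        _ = (n : ℝ) * (s/2) ^ 2 := by
            rw [Finset.sum_const, Finset.card_univ, Fintype.card_fin, nsmul_eq_mul]
    have h2 : euclNorm (v - symQuant n N v) ≤ Real.sqrt n * (s/2) := by
      rw [euclNorm]
      calc Real.sqrt (∑ i, (v - symQuant n N v) i ^ 2)
          ≤ Real.sqrt ((n : ℝ) * (s/2) ^ 2) := Real.sqrt_le_sqrt hsum
        _ = Real.sqrt n * (s/2) := by
            rw [Real.sqrt_mul (Nat.cast_nonneg n), Real.sqrt_sq (by positivity)]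
    refine h2.trans_eq ?_
    rw [hs, symScale, ← hM]
    field_simp

/-- For a random vector with i.i.d. `N(0, σ²)` entries,
`E‖x - Q_N(x)‖ ≤ (√(π log n) / (2^(N-1) - 1)) · E‖x‖`. -/
theorem stmt1 {Ω : Type*} [MeasurableSpace Ω] (μ : Measure Ω) [IsProbabilityMeasure μ]
    (n : ℕ) (hn : 2 ≤ n) (σ : ℝ) (hσ : 0 < σ) (N : ℕ) (hN : 2 ≤ N)
    (x : Ω → Fin n → ℝ)
    (hindep : iIndepFun (fun i ω => x ω i) μ)
    (hgauss : ∀ i : Fin n,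
      Measure.map (fun ω => x ω i) μ = gaussianReal 0 (Real.toNNReal (σ ^ 2))) :
    (∫ ω, euclNorm (x ω - symQuant n N (x ω)) ∂μ)
      ≤ Real.sqrt (Real.pi * Real.log n) / (2 ^ (N - 1) - 1) *
        (∫ ω, euclNorm (x ω) ∂μ) := by
  haveI : Nonempty (Fin n) := ⟨⟨0, by omega⟩⟩
  have hn0 : 0 < n := by omega
  set v : ℝ≥0 := Real.toNNReal (σ ^ 2) with hvdef
  have hσ2 : (0:ℝ) < σ ^ 2 := by positivity
  have hv : v ≠ 0 := by
    rw [hvdef, ne_eq, Real.toNNReal_eq_zero, not_le]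
    exact hσ2
  have hvR : (v:ℝ) = σ ^ 2 := Real.coe_toNNReal _ (sq_nonneg σ)
  -- measurability
  have hxm : ∀ i, AEMeasurable (fun ω => x ω i) μ := by
    intro i
    by_contra h
    have h2 := hgauss i
    rw [Measure.map_of_not_aemeasurable h] at h2
    have h3 : (0 : Measure ℝ) Set.univ = 1 := by rw [h2]; exact measure_univ
    simp at h3
  -- transfer lemmas
  have hInt : ∀ (i : Fin n) (g : ℝ → ℝ), Continuous g → Integrable g (gaussianReal 0 v) →
      Integrable (fun ω => g (x ω i)) μ := by
    intro i g hc hgi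
    have h1 : Integrable g (Measure.map (fun ω => x ω i) μ) := by rw [hgauss i]; exact hgi
    exact (integrable_map_measure hc.aestronglyMeasurable (hxm i)).mp h1
  have hEqI : ∀ (i : Fin n) (g : ℝ → ℝ), Continuous g →
      (∫ ω, g (x ω i) ∂μ) = ∫ y, g y ∂(gaussianReal 0 v) := by
    intro i g hc
    rw [← hgauss i]
    exact (integral_map (hxm i) hc.aestronglyMeasurable).symm
  -- the max random variable
  set M : Ω → ℝ := fun ω => ⨆ j, |x ω j| with hMdef
  have hM0 : ∀ ω, 0 ≤ M ω := fun ω => fin_sup_nonneg hn0 _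
  have hMle : ∀ ω, M ω ≤ ∑ j, |x ω j| := by
    intro ω
    obtain ⟨j, hj⟩ := fin_sup_exists hn0 (x ω)
    have hMj : M ω = |x ω j| := hj
    rw [hMj]
    exact Finset.single_le_sum (f := fun i => |x ω i|) (fun i _ => abs_nonneg _)
      (Finset.mem_univ j)
  have habs_i : ∀ i, Integrable (fun ω => |x ω i|) μ :=
    fun i => hInt i _ continuous_abs (gaussian_abs_integrable hv)
  have hsumabs : Integrable (fun ω => ∑ j, |x ω j|) μ :=
    integrable_finset_sum (f := fun j ω => |x ω j|) _ (fun i _ => habs_i i)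
  have hMaem : AEMeasurable M μ := by
    have h1 : AEMeasurable (Finset.univ.sup' Finset.univ_nonempty (fun j (ω : Ω) => |x ω j|)) μ := by
      exact Finset.sup'_induction (p := fun g => AEMeasurable g μ) _ _
        (fun f hf g hg => AEMeasurable.sup' hf hg)
        (fun j _ => continuous_abs.measurable.comp_aemeasurable (hxm j))
    have hfun : (Finset.univ.sup' Finset.univ_nonempty (fun j (ω : Ω) => |x ω j|)) = M :=
      funext fun ω => by rw [Finset.sup'_apply, Finset.sup'_univ_eq_ciSup]
    exact hfun ▸ h1
  have hMint : Integrable M μ :=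
    hsumabs.mono' hMaem.aestronglyMeasurable
      (Filter.Eventually.of_forall fun ω => by
        rw [Real.norm_eq_abs, abs_of_nonneg (hM0 ω)]; exact hMle ω)
  -- step 2 : ∫ M ≤ σ √(2 L)
  set L := Real.log (2 * (n:ℝ)) with hLdef
  have h1n : (1:ℝ) < n := by exact_mod_cast hn.trans_lt' one_lt_two
  have hLpos : 0 < L := Real.log_pos (by linarith)
  set t := Real.sqrt (2 * L) / σ with htdef
  have ht : 0 < t := div_pos (Real.sqrt_pos.mpr (by linarith)) hσ
  have hexp_i : ∀ (c : ℝ) (i : Fin n), Integrable (fun ω => Real.exp (c * x ω i)) μ :=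
    fun c i => hInt i _ (by continuity) (gaussian_mgf_integrable hv c)
  have hexp_eq : ∀ (c : ℝ) (i : Fin n),
      ∫ ω, Real.exp (c * x ω i) ∂μ = Real.exp (σ ^ 2 * c ^ 2 / 2) := by
    intro c i
    have h := hEqI i (fun y => Real.exp (c * y)) (by continuity)
    rw [gaussian_mgf hv, hvR] at h
    exact h
  set G : Ω → ℝ := fun ω => ∑ j, (Real.exp (t * x ω j) + Real.exp (-t * x ω j)) with hGdef
  have hGint : Integrable G μ :=
    integrable_finset_sum (f := fun j ω => Real.exp (t * x ω j) + Real.exp (-t * x ω j)) _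
      (fun j _ => (hexp_i t j).add (hexp_i (-t) j))
  have hpt : ∀ ω, Real.exp (t * M ω) ≤ G ω := by
    intro ω
    obtain ⟨j, hj⟩ := fin_sup_exists hn0 (x ω)
    have hMj : M ω = |x ω j| := hj
    rw [hMj]
    have h1 : Real.exp (t * |x ω j|) ≤ Real.exp (t * x ω j) + Real.exp (-t * x ω j) := by
      rcases abs_cases (x ω j) with ⟨h2, -⟩ | ⟨h2, -⟩
      · rw [h2]; exact le_add_of_nonneg_right (Real.exp_pos _).le
      · rw [h2, mul_neg, ← neg_mul]
        exact le_add_of_nonneg_left (Real.exp_pos _).le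
    refine h1.trans ?_
    exact Finset.single_le_sum (f := fun j => Real.exp (t * x ω j) + Real.exp (-t * x ω j))
      (fun i _ => by positivity) (Finset.mem_univ j)
  have hexpM : Integrable (fun ω => Real.exp (t * M ω)) μ :=
    hGint.mono' ((Real.continuous_exp.measurable.comp_aemeasurable
        (hMaem.const_mul t)).aestronglyMeasurable)
      (Filter.Eventually.of_forall fun ω => by
        rw [Real.norm_eq_abs, abs_of_pos (Real.exp_pos _)]; exact hpt ω)
  have hGval : ∫ ω, G ω ∂μ = (n:ℝ) * (2 * Real.exp (σ ^ 2 * t ^ 2 / 2)) := by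
    rw [hGdef]
    rw [integral_finset_sum (f := fun j ω => Real.exp (t * x ω j) + Real.exp (-t * x ω j)) _
      (fun j _ => (hexp_i t j).add (hexp_i (-t) j))]
    have h1 : ∀ j : Fin n, (∫ ω, (Real.exp (t * x ω j) + Real.exp (-t * x ω j)) ∂μ)
        = 2 * Real.exp (σ ^ 2 * t ^ 2 / 2) := by
      intro j
      rw [integral_add (hexp_i t j) (hexp_i (-t) j), hexp_eq t j, hexp_eq (-t) j, neg_pow]
      ring_nf
    simp_rw [h1]
    rw [Finset.sum_const, Finset.card_univ, Fintype.card_fin, nsmul_eq_mul]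
  have hjensen : Real.exp (t * ∫ ω, M ω ∂μ) ≤ ∫ ω, Real.exp (t * M ω) ∂μ := by
    have h := convexOn_exp.map_average_le Real.continuous_exp.continuousOn isClosed_univ
      (Filter.Eventually.of_forall fun ω => Set.mem_univ _) (hMint.const_mul t) hexpM
    rw [average_eq_integral, average_eq_integral, integral_const_mul] at h
    exact h
  have hMbound : (∫ ω, M ω ∂μ) ≤ σ * Real.sqrt (2 * L) := by
    have h1 : (∫ ω, Real.exp (t * M ω) ∂μ) ≤ ∫ ω, G ω ∂μ :=
      integral_mono hexpM hGint hpt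
    have h2 : Real.exp (t * ∫ ω, M ω ∂μ) ≤ Real.exp (L + σ ^ 2 * t ^ 2 / 2) := by
      refine (hjensen.trans (h1.trans_eq hGval)).trans_eq ?_
      rw [Real.exp_add, Real.exp_log (by positivity : (0:ℝ) < 2 * n)]
      ring
    have h3 : t * (∫ ω, M ω ∂μ) ≤ L + σ ^ 2 * t ^ 2 / 2 := Real.exp_le_exp.mp h2
    have ht2 : t ^ 2 = 2 * L / σ ^ 2 := by
      rw [htdef, div_pow, Real.sq_sqrt (by linarith : (0:ℝ) ≤ 2 * L)]
    have h4 : σ ^ 2 * t ^ 2 / 2 = L := by rw [ht2]; field_simp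
    have h5 : t * (σ * Real.sqrt (2 * L)) = 2 * L := by
      calc t * (σ * Real.sqrt (2 * L))
          = (Real.sqrt (2 * L) * Real.sqrt (2 * L)) * (σ / σ) := by rw [htdef]; ring
        _ = 2 * L := by rw [div_self hσ.ne', mul_one,
            Real.mul_self_sqrt (by linarith : (0:ℝ) ≤ 2 * L)]
    have h6 : t * (∫ ω, M ω ∂μ) ≤ t * (σ * Real.sqrt (2 * L)) := by
      rw [h5]; linarith [h3, h4]
    exact le_of_mul_le_mul_left h6 ht
  -- step 3 : lower bound on ∫ ‖x‖
  have hen : ∀ (w : Fin n → ℝ), 0 ≤ euclNorm w := fun w => Real.sqrt_nonneg _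
  have heucl_aesm : AEStronglyMeasurable (fun ω => euclNorm (x ω)) μ := by
    have h1 : AEMeasurable (fun ω => ∑ j, (x ω j) ^ 2) μ :=
      Finset.aemeasurable_fun_sum _ fun i _ => ((hxm i).pow_const 2)
    exact (Real.continuous_sqrt.measurable.comp_aemeasurable h1).aestronglyMeasurable
  have heuclle : ∀ ω, euclNorm (x ω) ≤ ∑ j, |x ω j| := by
    intro ω
    rw [euclNorm]
    calc Real.sqrt (∑ j, (x ω j) ^ 2) = Real.sqrt (∑ j, |x ω j| ^ 2) := by simp [sq_abs]
      _ ≤ Real.sqrt ((∑ j, |x ω j|) ^ 2) :=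
          Real.sqrt_le_sqrt (Finset.sum_sq_le_sq_sum_of_nonneg fun i _ => abs_nonneg _)
      _ = ∑ j, |x ω j| := Real.sqrt_sq (Finset.sum_nonneg fun i _ => abs_nonneg _)
  have heuclint : Integrable (fun ω => euclNorm (x ω)) μ :=
    hsumabs.mono' heucl_aesm
      (Filter.Eventually.of_forall fun ω => by
        rw [Real.norm_eq_abs, abs_of_nonneg (hen _)]; exact heuclle ω)
  have hsqn : (0:ℝ) < Real.sqrt n := Real.sqrt_pos.mpr (by positivity)
  have habs_val : ∀ i : Fin n, (∫ ω, |x ω i| ∂μ) = σ * Real.sqrt (2 / π) := by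
    intro i
    rw [hEqI i _ continuous_abs, gaussian_abs_integral hv, hvR]
    rw [show 2 * σ ^ 2 / π = σ ^ 2 * (2 / π) by ring, Real.sqrt_mul (sq_nonneg σ),
      Real.sqrt_sq hσ.le]
  have hlow : Real.sqrt n * (σ * Real.sqrt (2 / π)) ≤ ∫ ω, euclNorm (x ω) ∂μ := by
    have hptw : ∀ ω, (∑ j, |x ω j|) ≤ Real.sqrt n * euclNorm (x ω) := by
      intro ω
      have hcs : (∑ j, |x ω j|) ^ 2 ≤ (n:ℝ) * ∑ j, (x ω j) ^ 2 := by
        have h := sq_sum_le_card_mul_sum_sq (s := Finset.univ) (f := fun j => |x ω j|)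
        simpa [sq_abs, Finset.card_univ] using h
      have h0 : 0 ≤ ∑ j, |x ω j| := Finset.sum_nonneg fun i _ => abs_nonneg _
      rw [euclNorm, ← Real.sqrt_sq h0, ← Real.sqrt_mul (Nat.cast_nonneg n)]
      exact Real.sqrt_le_sqrt hcs
    have h1 : (∫ ω, (∑ j, |x ω j|) ∂μ) ≤ Real.sqrt n * ∫ ω, euclNorm (x ω) ∂μ := by
      have := integral_mono hsumabs (heuclint.const_mul (Real.sqrt n))
        (fun ω => hptw ω)
      rwa [integral_const_mul] at this
    have h2 : (∫ ω, (∑ j, |x ω j|) ∂μ) = (n:ℝ) * (σ * Real.sqrt (2 / π)) := by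
      rw [integral_finset_sum (f := fun j ω => |x ω j|) _ (fun i _ => habs_i i)]
      simp_rw [habs_val]
      rw [Finset.sum_const, Finset.card_univ, Fintype.card_fin, nsmul_eq_mul]
    rw [h2] at h1
    have h3 : Real.sqrt n * (Real.sqrt n * (σ * Real.sqrt (2 / π)))
        ≤ Real.sqrt n * ∫ ω, euclNorm (x ω) ∂μ := by
      rw [← mul_assoc, Real.mul_self_sqrt (Nat.cast_nonneg n)]
      exact h1
    exact le_of_mul_le_mul_left h3 hsqn
  -- step 1 : pointwise quantization bound integrated
  set S : ℝ := 2 ^ (N - 1) - 1 with hSdef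
  have hS : (1:ℝ) ≤ S := pow_sub_one_ge hN
  have hS0 : (0:ℝ) < S := lt_of_lt_of_le one_pos hS
  have hSne : S ≠ 0 := hS0.ne'
  have hstep1 : (∫ ω, euclNorm (x ω - symQuant n N (x ω)) ∂μ)
      ≤ Real.sqrt n / (2 * S) * ∫ ω, M ω ∂μ := by
    have h1 := integral_mono_of_nonneg (μ := μ)
      (Filter.Eventually.of_forall fun ω => hen (x ω - symQuant n N (x ω)))
      (hMint.const_mul (Real.sqrt n / (2 * S)))
      (Filter.Eventually.of_forall fun ω => pointwise_bound n N hn0 hN (x ω))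
    rwa [integral_const_mul] at h1
  -- final arithmetic
  have hπ : (0:ℝ) < π := Real.pi_pos
  have hlog2 : Real.log 2 ≤ Real.log n := by
    have h2n : (2:ℝ) ≤ (n:ℝ) := by exact_mod_cast hn
    exact Real.log_le_log (by norm_num) h2n
  have hlogn : 0 < Real.log n := Real.log_pos h1n
  have hLsplit : L = Real.log 2 + Real.log n := by
    rw [hLdef, Real.log_mul (by norm_num) (by positivity)]
  have h2L : 2 * L ≤ 8 * Real.log n := by rw [hLsplit]; linarith
  have hsqrt4 : Real.sqrt 4 = 2 := by
    rw [show (4:ℝ) = 2 ^ 2 by norm_num, Real.sqrt_sq (by norm_num : (0:ℝ) ≤ 2)]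
  have hL2 : Real.sqrt (2 * L) ≤ 2 * Real.sqrt (2 * Real.log n) := by
    calc Real.sqrt (2 * L) ≤ Real.sqrt (8 * Real.log n) := Real.sqrt_le_sqrt h2L
      _ = 2 * Real.sqrt (2 * Real.log n) := by
          rw [show (8:ℝ) * Real.log n = 4 * (2 * Real.log n) by ring,
            Real.sqrt_mul (by norm_num : (0:ℝ) ≤ 4), hsqrt4]
  have hR : Real.sqrt (π * Real.log n) * Real.sqrt (2 / π) = Real.sqrt (2 * Real.log n) := by
    rw [← Real.sqrt_mul (by positivity)]
    congr 1
    field_simp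
  have hkey : Real.sqrt n / (2 * S) * (σ * Real.sqrt (2 * L))
      ≤ Real.sqrt (π * Real.log n) / S
        * (Real.sqrt n * (σ * Real.sqrt (2 / π))) := by
    have hc1 : (0:ℝ) ≤ Real.sqrt n / (2 * S) :=
      div_nonneg (Real.sqrt_nonneg _) (by linarith)
    calc Real.sqrt n / (2 * S) * (σ * Real.sqrt (2 * L))
        ≤ Real.sqrt n / (2 * S) * (σ * (2 * Real.sqrt (2 * Real.log n))) := by
          apply mul_le_mul_of_nonneg_left _ hc1
          exact mul_le_mul_of_nonneg_left hL2 hσ.le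
      _ = Real.sqrt (2 * Real.log n) * Real.sqrt n * σ / S := by
          field_simp
      _ = Real.sqrt (π * Real.log n) / S
            * (Real.sqrt n * (σ * Real.sqrt (2 / π))) := by
          rw [← hR]
          field_simp
  have hcoef : (0:ℝ) ≤ Real.sqrt (π * Real.log n) / S :=
    div_nonneg (Real.sqrt_nonneg _) hS0.le
  calc (∫ ω, euclNorm (x ω - symQuant n N (x ω)) ∂μ)
      ≤ Real.sqrt n / (2 * S) * ∫ ω, M ω ∂μ := hstep1
    _ ≤ Real.sqrt n / (2 * S) * (σ * Real.sqrt (2 * L)) := by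
        apply mul_le_mul_of_nonneg_left hMbound
        exact div_nonneg (Real.sqrt_nonneg _) (by linarith)
    _ ≤ Real.sqrt (π * Real.log n) / S
          * (Real.sqrt n * (σ * Real.sqrt (2 / π))) := hkey
    _ ≤ Real.sqrt (π * Real.log n) / S * ∫ ω, euclNorm (x ω) ∂μ :=
        mul_le_mul_of_nonneg_left hlow hcoef
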